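/- Every finitely generated residually finite quandle is Hopfian: every surjective quandle endomorphism is injective (hence an automorphism). -/
import Mathlib


open Quandles

def ResiduallyFiniteQuandle (Q : Type*) [Quandle Q] : Prop :=
  ∀ x y : Q, x ≠ y →
    ∃ (F : Type) (_ : Quandle F) (_ : Fintype F) (φ : Q →◃ F), φ x ≠ φ y

/-- A quandle is finitely generated if some finite subset generates it: the
only subset containing it and closed under the operation and its inverse is
the whole quandle. -/
def Quandle.FG (Q : Type*) [Quandle Q] : Prop :=
  ∃ T : Finset Q, ∀ U : Set Q, ↑T ⊆ U → (∀ x ∈ U, ∀ y ∈ U, x ◃ y ∈ U) →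
    (∀ x ∈ U, ∀ y ∈ U, x ◃⁻¹ y ∈ U) → U = Set.univ

/-- A shelf hom of racks preserves the inverse action. -/
lemma shelfHom_map_invAct {R S : Type*} [Rack R] [Rack S] (f : R →◃ S) (x y : R) :
    f (x ◃⁻¹ y) = f x ◃⁻¹ f y := by
  have h : f x ◃ f (x ◃⁻¹ y) = f x ◃ (f x ◃⁻¹ f y) := by
    rw [← f.map_act, Rack.act_invAct_eq, Rack.act_invAct_eq]
  exact Rack.left_cancel (f x) |>.mp h

/-- Iterates of a shelf hom preserve the action. -/
lemma iterate_map_act {Q : Type*} [Quandle Q] (φ : Q →◃ Q) (n : ℕ) (x y : Q) :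
    (⇑φ)^[n] (x ◃ y) = (⇑φ)^[n] x ◃ (⇑φ)^[n] y := by
  induction n with
  | zero => simp
  | succ n ih => simp [Function.iterate_succ_apply', ih, φ.map_act]

lemma iterate_map_invAct {Q : Type*} [Quandle Q] (φ : Q →◃ Q) (n : ℕ) (x y : Q) :
    (⇑φ)^[n] (x ◃⁻¹ y) = (⇑φ)^[n] x ◃⁻¹ (⇑φ)^[n] y := by
  induction n with
  | zero => simp
  | succ n ih => simp [Function.iterate_succ_apply', ih, shelfHom_map_invAct]

/-- Every finitely generated residually finite quandle is Hopfian: each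
surjective quandle endomorphism is injective. -/
theorem fg_residually_finite_hopfian (Q : Type*) [Quandle Q]
    (hfg : Quandle.FG Q) (hrf : ResiduallyFiniteQuandle Q)
    (φ : Q →◃ Q) (hφ : Function.Surjective φ) : Function.Injective φ := by
  obtain ⟨T, hT⟩ := hfg
  intro a b hab
  by_contra hne
  have hab' : a ≠ b := fun h => hne (h ▸ rfl)
  obtain ⟨F, _inst, _fin, ψ, hψ⟩ := hrf a b hab'
  -- the maps n ↦ ψ ∘ φ^[n] restricted to T
  have : ∃ n m : ℕ, n ≠ m ∧
      (fun t : T => ψ ((⇑φ)^[n] t)) = (fun t : T => ψ ((⇑φ)^[m] t)) := by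
    obtain ⟨n, m, hnm, h⟩ := Finite.exists_ne_map_eq_of_infinite
      (fun n : ℕ => (fun t : T => ψ ((⇑φ)^[n] t)))
    exact ⟨n, m, hnm, h⟩
  obtain ⟨n, m, hnm, hfun⟩ := this
  -- WLOG n < m
  wlog hlt : n < m generalizing n m
  · exact this m n hnm.symm hfun.symm ((hnm.lt_or_gt).resolve_left hlt)
  -- ψ ∘ φ^[n] = ψ ∘ φ^[m] everywhere, by the generation property
  have hall : ∀ x : Q, ψ ((⇑φ)^[n] x) = ψ ((⇑φ)^[m] x) := by
    set U : Set Q := {x | ψ ((⇑φ)^[n] x) = ψ ((⇑φ)^[m] x)} with hU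
    have hTU : ↑T ⊆ U := fun t ht => congrFun hfun ⟨t, ht⟩
    have hcl : ∀ x ∈ U, ∀ y ∈ U, x ◃ y ∈ U := by
      intro x hx y hy
      simp only [hU, Set.mem_setOf_eq, iterate_map_act, ψ.map_act] at *
      rw [hx, hy]
    have hcl' : ∀ x ∈ U, ∀ y ∈ U, x ◃⁻¹ y ∈ U := by
      intro x hx y hy
      simp only [hU, Set.mem_setOf_eq, iterate_map_invAct, shelfHom_map_invAct] at *
      rw [hx, hy]
    have := hT U hTU hcl hcl'
    intro x
    have : x ∈ U := this ▸ Set.mem_univ x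
    exact this
  -- φ^[n] is surjective
  have hsurj : Function.Surjective ((⇑φ)^[n]) := Function.Surjective.iterate hφ n
  obtain ⟨k', hk'⟩ : ∃ k', m - n = k' + 1 := ⟨m - n - 1, by omega⟩
  have hkey : ∀ x : Q, ψ x = ψ ((⇑φ)^[k' + 1] x) := by
    intro x
    obtain ⟨y, rfl⟩ := hsurj x
    have := hall y
    rw [this]
    congr 1
    rw [← Function.iterate_add_apply]
    congr 1
    omega
  apply hψ
  have ha := hkey a
  have hb := hkey b
  rw [Function.iterate_succ_apply, hab, ← Function.iterate_succ_apply] at ha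
  rw [ha, ← hb]
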